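/- Let A_1,…,A_N be events, ξ = Σ_{i=1}^N 1_{A_i}. Then P(∪_{k=1}^N A_k) ≤ Σ_{k=1}^N [ P(A_k) − (E[(ξ−1)·1_{A_k}])² / E[ξ(ξ−1)·1_{A_k}] ], with the convention 0/0 = 0. -/

import Mathlib

open Finset MeasureTheory

/-- Bounded measurable functions are integrable w.r.t. a finite measure. -/
lemma frolov_int_aux {Ω : Type*} [MeasurableSpace Ω] (P : Measure Ω) [IsFiniteMeasure P]
    (f : Ω → ℝ) (C : ℝ) (hm : Measurable f) (hb : ∀ ω, |f ω| ≤ C) :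
    Integrable f P :=
  (integrable_const C).mono' hm.aestronglyMeasurable
    (Filter.Eventually.of_forall fun ω => by simpa [Real.norm_eq_abs] using hb ω)

/-- Cauchy–Schwarz step:
`(∫ (ξ-1)·1_S)^2 / ∫ ξ(ξ-1)·1_S ≤ ∫ ((ξ-1)/ξ)·1_S` when `ξ ≥ 1` on `S`. -/
lemma frolov_cs_aux {Ω : Type*} [MeasurableSpace Ω] (P : Measure Ω) [IsProbabilityMeasure P]
    (ξ : Ω → ℝ) (hξm : Measurable ξ) (C : ℝ)
    (hξle : ∀ ω, |ξ ω| ≤ C) (S : Set Ω) (hS : MeasurableSet S)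
    (h1 : ∀ ω ∈ S, 1 ≤ ξ ω) :
    (∫ ω, (ξ ω - 1) * Set.indicator S (fun _ => (1 : ℝ)) ω ∂P) ^ 2
      / (∫ ω, ξ ω * (ξ ω - 1) * Set.indicator S (fun _ => (1 : ℝ)) ω ∂P)
    ≤ ∫ ω, (ξ ω - 1) / ξ ω * Set.indicator S (fun _ => (1 : ℝ)) ω ∂P := by
  classical
  set χ : Ω → ℝ := Set.indicator S (fun _ => (1 : ℝ)) with hχdef
  have hχm : Measurable χ := measurable_const.indicator hS
  have hχ_mem : ∀ ω ∈ S, χ ω = 1 := fun ω hω => Set.indicator_of_mem hω _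
  have hχ_nmem : ∀ ω, ω ∉ S → χ ω = 0 := fun ω hω => Set.indicator_of_notMem hω _
  -- the three integrands
  set X : Ω → ℝ := fun ω => (ξ ω - 1) * χ ω with hXdef
  set Y : Ω → ℝ := fun ω => ξ ω * (ξ ω - 1) * χ ω with hYdef
  set G : Ω → ℝ := fun ω => (ξ ω - 1) / ξ ω * χ ω with hGdef
  have hXm : Measurable X := (hξm.sub measurable_const).mul hχm
  have hYm : Measurable Y := ((hξm.mul (hξm.sub measurable_const))).mul hχm
  have hGm : Measurable G := ((hξm.sub measurable_const).div hξm).mul hχm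
  have hXb : ∀ ω, |X ω| ≤ C + 1 := by
    intro ω
    by_cases h : ω ∈ S
    · simp only [hXdef, hχ_mem ω h, mul_one]
      have := hξle ω
      rw [abs_le] at this ⊢
      constructor <;> linarith [this.1, this.2]
    · simp only [hXdef, hχ_nmem ω h, mul_zero, abs_zero]
      have := (abs_nonneg (ξ ω)).trans (hξle ω)
      linarith
  have hYb : ∀ ω, |Y ω| ≤ C * (C + 1) := by
    intro ω
    have hC : 0 ≤ C := (abs_nonneg (ξ ω)).trans (hξle ω)
    by_cases h : ω ∈ S
    · simp only [hYdef, hχ_mem ω h, mul_one]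
      calc |ξ ω * (ξ ω - 1)| = |ξ ω| * |ξ ω - 1| := abs_mul _ _
        _ ≤ C * (C + 1) := by
            apply mul_le_mul (hξle ω) _ (abs_nonneg _) hC
            have := hξle ω; rw [abs_le] at this ⊢
            constructor <;> linarith [this.1, this.2]
    · simp only [hYdef, hχ_nmem ω h, mul_zero, abs_zero]
      positivity
  have hGb : ∀ ω, |G ω| ≤ 1 := by
    intro ω
    by_cases h : ω ∈ S
    · simp only [hGdef, hχ_mem ω h, mul_one]
      have h1' := h1 ω h
      have hpos : 0 < ξ ω := lt_of_lt_of_le zero_lt_one h1'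
      rw [abs_le]
      constructor
      · have : 0 ≤ (ξ ω - 1) / ξ ω := div_nonneg (by linarith) hpos.le
        linarith
      · rw [div_le_one hpos]; linarith
    · simp only [hGdef, hχ_nmem ω h, mul_zero, abs_zero]; norm_num
  have hXi : Integrable X P := frolov_int_aux P X (C + 1) hXm hXb
  have hYi : Integrable Y P := frolov_int_aux P Y (C * (C + 1)) hYm hYb
  have hGi : Integrable G P := frolov_int_aux P G 1 hGm hGb
  set a : ℝ := ∫ ω, X ω ∂P with hadef
  set b : ℝ := ∫ ω, Y ω ∂P with hbdef
  have hY_nn : ∀ ω, 0 ≤ Y ω := by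
    intro ω
    by_cases h : ω ∈ S
    · have := h1 ω h
      simp only [hYdef, hχ_mem ω h, mul_one]
      have : 0 ≤ ξ ω := by linarith
      nlinarith [h1 ω h]
    · simp [hYdef, hχ_nmem ω h]
  have hG_nn : ∀ ω, 0 ≤ G ω := by
    intro ω
    by_cases h : ω ∈ S
    · have h1' := h1 ω h
      simp only [hGdef, hχ_mem ω h, mul_one]
      exact div_nonneg (by linarith) (by linarith)
    · simp [hGdef, hχ_nmem ω h]
  have hb_nn : 0 ≤ b := integral_nonneg hY_nn
  have hG_int_nn : 0 ≤ ∫ ω, G ω ∂P := integral_nonneg hG_nn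
  rcases eq_or_lt_of_le hb_nn with hb0 | hbpos
  · rw [← hb0]
    simpa using hG_int_nn
  · -- Cauchy–Schwarz via the quadratic trick
    set t : ℝ := a / b with htdef
    set u : Ω → ℝ := fun ω => Real.sqrt ((ξ ω - 1) / ξ ω) * χ ω with hudef
    set v : Ω → ℝ := fun ω => Real.sqrt (ξ ω * (ξ ω - 1)) * χ ω with hvdef
    have hpt : ∀ ω, (u ω - t * v ω) ^ 2 = G ω - 2 * t * X ω + t ^ 2 * Y ω := by
      intro ω
      by_cases h : ω ∈ S
      · have h1' := h1 ω h
        have hpos : 0 < ξ ω := lt_of_lt_of_le zero_lt_one h1'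
        have hg0 : 0 ≤ (ξ ω - 1) / ξ ω := div_nonneg (by linarith) hpos.le
        have hy0 : 0 ≤ ξ ω * (ξ ω - 1) := by nlinarith
        simp only [hudef, hvdef, hGdef, hXdef, hYdef, hχ_mem ω h, mul_one]
        have hu2 : Real.sqrt ((ξ ω - 1) / ξ ω) ^ 2 = (ξ ω - 1) / ξ ω := Real.sq_sqrt hg0
        have hv2 : Real.sqrt (ξ ω * (ξ ω - 1)) ^ 2 = ξ ω * (ξ ω - 1) := Real.sq_sqrt hy0
        have huv : Real.sqrt ((ξ ω - 1) / ξ ω) * Real.sqrt (ξ ω * (ξ ω - 1)) = ξ ω - 1 := by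
          rw [← Real.sqrt_mul hg0]
          have : (ξ ω - 1) / ξ ω * (ξ ω * (ξ ω - 1)) = (ξ ω - 1) ^ 2 := by
            field_simp
          rw [this, Real.sqrt_sq (by linarith)]
        linear_combination hu2 - 2 * t * huv + t ^ 2 * hv2
      · simp [hudef, hvdef, hGdef, hXdef, hYdef, hχ_nmem ω h]
    have key : 0 ≤ ∫ ω, (u ω - t * v ω) ^ 2 ∂P :=
      integral_nonneg fun ω => sq_nonneg _
    have hexp : ∫ ω, (u ω - t * v ω) ^ 2 ∂P
        = (∫ ω, G ω ∂P) - 2 * t * a + t ^ 2 * b := by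
      have hfe : (fun ω => (u ω - t * v ω) ^ 2)
          = fun ω => G ω - 2 * t * X ω + t ^ 2 * Y ω := funext hpt
      have h1i : Integrable (fun ω => G ω - 2 * t * X ω) P := hGi.sub (hXi.const_mul (2 * t))
      have h2i : Integrable (fun ω => t ^ 2 * Y ω) P := hYi.const_mul (t ^ 2)
      have h3i : Integrable (fun ω => 2 * t * X ω) P := hXi.const_mul (2 * t)
      rw [hfe, integral_add h1i h2i, integral_sub hGi h3i,
        integral_const_mul, integral_const_mul]
    rw [hexp] at key
    have hkey2 : a ^ 2 / b ≤ ∫ ω, G ω ∂P := by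
      have e1 : t ^ 2 * b = a ^ 2 / b := by
        rw [htdef]; field_simp
      have e2 : 2 * t * a = 2 * (a ^ 2 / b) := by
        rw [htdef]; field_simp
      rw [e1, e2] at key
      linarith
    exact hkey2

theorem frolov_cor11 (Ω : Type*) [MeasurableSpace Ω]
    (P : Measure Ω) [IsProbabilityMeasure P]
    (N : ℕ) (A : ℕ → Set Ω) (hA : ∀ k, MeasurableSet (A k))
    (ξ : Ω → ℝ)
    (hξ : ∀ ω, ξ ω = ∑ i ∈ Finset.Icc 1 N, Set.indicator (A i) (fun _ => (1 : ℝ)) ω) :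
    (P (⋃ k ∈ Finset.Icc 1 N, A k)).toReal
      ≤ ∑ k ∈ Finset.Icc 1 N,
          ((P (A k)).toReal
            - (∫ ω, (ξ ω - 1) * Set.indicator (A k) (fun _ => (1 : ℝ)) ω ∂P) ^ 2
              / ∫ ω, ξ ω * (ξ ω - 1) * Set.indicator (A k) (fun _ => (1 : ℝ)) ω ∂P) := by
  classical
  have hξm : Measurable ξ := by
    have h : ξ = fun ω => ∑ i ∈ Finset.Icc 1 N, Set.indicator (A i) (fun _ => (1 : ℝ)) ω :=
      funext hξ
    rw [h]
    exact Finset.measurable_sum _ fun i _ => measurable_const.indicator (hA i)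
  have hξnn : ∀ ω, 0 ≤ ξ ω := fun ω => by
    rw [hξ ω]
    exact Finset.sum_nonneg fun i _ => Set.indicator_nonneg (fun _ _ => zero_le_one) _
  have hξleN : ∀ ω, ξ ω ≤ N := by
    intro ω
    rw [hξ ω]
    calc (∑ i ∈ Finset.Icc 1 N, Set.indicator (A i) (fun _ => (1 : ℝ)) ω)
        ≤ ∑ i ∈ Finset.Icc 1 N, 1 := by
          refine Finset.sum_le_sum fun i _ => ?_
          by_cases h : ω ∈ A i <;> simp [Set.indicator, h]
      _ = N := by simp
  have hξabs : ∀ ω, |ξ ω| ≤ (N : ℝ) := fun ω => abs_le.2 ⟨by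
      have := hξnn ω; have : ((0:ℝ)) ≤ N := le_trans this (hξleN ω); linarith [hξnn ω], hξleN ω⟩
  have hξ1 : ∀ k ∈ Finset.Icc 1 N, ∀ ω ∈ A k, 1 ≤ ξ ω := by
    intro k hk ω hω
    rw [hξ ω]
    have h := Finset.single_le_sum
      (f := fun i => Set.indicator (A i) (fun _ => (1 : ℝ)) ω)
      (fun i _ => Set.indicator_nonneg (fun _ _ => zero_le_one) _) hk
    simpa [Set.indicator_of_mem hω] using h
  -- integrability of the per-event functions
  have hfm : ∀ k, Measurable fun ω => Set.indicator (A k) (fun _ => (1 : ℝ)) ω / ξ ω :=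
    fun k => (measurable_const.indicator (hA k)).div hξm
  have hfb : ∀ k ∈ Finset.Icc 1 N, ∀ ω,
      |Set.indicator (A k) (fun _ => (1 : ℝ)) ω / ξ ω| ≤ 1 := by
    intro k hk ω
    by_cases h : ω ∈ A k
    · have h1 := hξ1 k hk ω h
      have hpos : 0 < ξ ω := lt_of_lt_of_le zero_lt_one h1
      rw [Set.indicator_of_mem h]
      rw [abs_le]
      constructor
      · have : (0:ℝ) ≤ 1 / ξ ω := by positivity
        linarith
      · rw [div_le_one hpos]; exact h1
    · rw [Set.indicator_of_notMem h]; simp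
  have hfi : ∀ k ∈ Finset.Icc 1 N,
      Integrable (fun ω => Set.indicator (A k) (fun _ => (1 : ℝ)) ω / ξ ω) P :=
    fun k hk => frolov_int_aux P _ 1 (hfm k) (hfb k hk)
  have hgm : ∀ k, Measurable fun ω =>
      (ξ ω - 1) / ξ ω * Set.indicator (A k) (fun _ => (1 : ℝ)) ω :=
    fun k => ((hξm.sub measurable_const).div hξm).mul (measurable_const.indicator (hA k))
  have hgb : ∀ k ∈ Finset.Icc 1 N, ∀ ω,
      |(ξ ω - 1) / ξ ω * Set.indicator (A k) (fun _ => (1 : ℝ)) ω| ≤ 1 := by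
    intro k hk ω
    by_cases h : ω ∈ A k
    · have h1 := hξ1 k hk ω h
      have hpos : 0 < ξ ω := lt_of_lt_of_le zero_lt_one h1
      rw [Set.indicator_of_mem h, mul_one, abs_le]
      constructor
      · have : 0 ≤ (ξ ω - 1) / ξ ω := div_nonneg (by linarith) hpos.le
        linarith
      · rw [div_le_one hpos]; linarith
    · rw [Set.indicator_of_notMem h]; simp
  have hgi : ∀ k ∈ Finset.Icc 1 N,
      Integrable (fun ω => (ξ ω - 1) / ξ ω * Set.indicator (A k) (fun _ => (1 : ℝ)) ω) P :=
    fun k hk => frolov_int_aux P _ 1 (hgm k) (hgb k hk)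
  have hχi : ∀ k, Integrable (fun ω => Set.indicator (A k) (fun _ => (1 : ℝ)) ω) P := by
    intro k
    refine frolov_int_aux P _ 1 (measurable_const.indicator (hA k)) fun ω => ?_
    by_cases h : ω ∈ A k <;> simp [Set.indicator, h]
  -- Step 1 : P(∪ A_k) = Σ_k ∫ 1_{A_k}/ξ
  have hstep1 : (P (⋃ k ∈ Finset.Icc 1 N, A k)).toReal
      = ∑ k ∈ Finset.Icc 1 N,
          ∫ ω, Set.indicator (A k) (fun _ => (1 : ℝ)) ω / ξ ω ∂P := by
    have hU : MeasurableSet (⋃ k ∈ Finset.Icc 1 N, A k) :=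
      Finset.measurableSet_biUnion _ fun k _ => hA k
    have hpt : ∀ ω, Set.indicator (⋃ k ∈ Finset.Icc 1 N, A k) (fun _ => (1 : ℝ)) ω
        = ∑ k ∈ Finset.Icc 1 N, Set.indicator (A k) (fun _ => (1 : ℝ)) ω / ξ ω := by
      intro ω
      by_cases h : ω ∈ ⋃ k ∈ Finset.Icc 1 N, A k
      · rw [Set.indicator_of_mem h]
        simp only [Set.mem_iUnion] at h
        obtain ⟨k, hk, hωk⟩ := h
        have hpos : 0 < ξ ω := lt_of_lt_of_le zero_lt_one (hξ1 k hk ω hωk)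
        rw [← Finset.sum_div, ← hξ ω, div_self hpos.ne']
      · rw [Set.indicator_of_notMem h]
        refine (Finset.sum_eq_zero fun k hk => ?_).symm
        have hωk : ω ∉ A k := fun hc => h (Set.mem_biUnion hk hc)
        rw [Set.indicator_of_notMem hωk, zero_div]
      -- done
    calc (P (⋃ k ∈ Finset.Icc 1 N, A k)).toReal
        = ∫ ω, Set.indicator (⋃ k ∈ Finset.Icc 1 N, A k) (fun _ => (1 : ℝ)) ω ∂P := by
          rw [MeasureTheory.integral_indicator_const (1 : ℝ) hU]
          simp; rfl
      _ = ∫ ω, ∑ k ∈ Finset.Icc 1 N, Set.indicator (A k) (fun _ => (1 : ℝ)) ω / ξ ω ∂P := by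
          exact integral_congr_ae (Filter.Eventually.of_forall hpt)
      _ = ∑ k ∈ Finset.Icc 1 N,
            ∫ ω, Set.indicator (A k) (fun _ => (1 : ℝ)) ω / ξ ω ∂P :=
          integral_finset_sum _ hfi
  -- Step 2 : ∫ 1_{A_k}/ξ = P(A_k) - ∫ ((ξ-1)/ξ)·1_{A_k}
  have hstep2 : ∀ k ∈ Finset.Icc 1 N,
      ∫ ω, Set.indicator (A k) (fun _ => (1 : ℝ)) ω / ξ ω ∂P
        = (P (A k)).toReal
          - ∫ ω, (ξ ω - 1) / ξ ω * Set.indicator (A k) (fun _ => (1 : ℝ)) ω ∂P := by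
    intro k hk
    have hpt : ∀ ω, Set.indicator (A k) (fun _ => (1 : ℝ)) ω / ξ ω
        = Set.indicator (A k) (fun _ => (1 : ℝ)) ω
          - (ξ ω - 1) / ξ ω * Set.indicator (A k) (fun _ => (1 : ℝ)) ω := by
      intro ω
      by_cases h : ω ∈ A k
      · have h1 := hξ1 k hk ω h
        have hpos : 0 < ξ ω := lt_of_lt_of_le zero_lt_one h1
        rw [Set.indicator_of_mem h, mul_one]
        field_simp; ring
      · rw [Set.indicator_of_notMem h]; simp
    have : (fun ω => Set.indicator (A k) (fun _ => (1 : ℝ)) ω / ξ ω)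
        = fun ω => Set.indicator (A k) (fun _ => (1 : ℝ)) ω
          - (ξ ω - 1) / ξ ω * Set.indicator (A k) (fun _ => (1 : ℝ)) ω := funext hpt
    rw [this, integral_sub (hχi k) (hgi k hk)]
    congr 1
    rw [MeasureTheory.integral_indicator_const (1 : ℝ) (hA k)]
    simp; rfl
  -- assemble
  rw [hstep1]
  refine Finset.sum_le_sum fun k hk => ?_
  rw [hstep2 k hk]
  have := frolov_cs_aux P ξ hξm (N : ℝ) hξabs (A k) (hA k) (hξ1 k hk)
  linarith
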